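/- Let A be a C*-algebra, K a closed essential ideal, S a closed semiregular operator on A. Then D(S)·K is a core for the restriction S|_K, i.e., the closure of the restriction of S to D(S)·K equals S|_K. -/

import Mathlib

/-- A densely defined operator on a C*-algebra `A`, presented by a total function `toFun`
whose meaningful values are those on its domain `dom`.  The domain is a dense right ideal,
on which the operator is `ℂ`-linear and right `A`-linear (`S(a b) = (S a) b`). -/
structure UnboundedOp (A : Type*) [NonUnitalCStarAlgebra A] where
  dom : Set A
  toFun : A → A
  dense_dom : Dense dom
  zero_mem : (0 : A) ∈ dom
  add_mem : ∀ a ∈ dom, ∀ b ∈ dom, a + b ∈ dom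
  smul_mem : ∀ (c : ℂ), ∀ a ∈ dom, c • a ∈ dom
  mul_mem : ∀ a ∈ dom, ∀ x : A, a * x ∈ dom
  map_add' : ∀ a ∈ dom, ∀ b ∈ dom, toFun (a + b) = toFun a + toFun b
  map_smul' : ∀ (c : ℂ), ∀ a ∈ dom, toFun (c • a) = c • toFun a
  map_mul' : ∀ a ∈ dom, ∀ x : A, toFun (a * x) = toFun a * x

namespace UnboundedOp

variable {A : Type*} [NonUnitalCStarAlgebra A]

/-- The domain of the adjoint of `S`, with respect to the `A`-valued inner
product `⟨a, b⟩ = a* b` on `A`: those `a` admitting `c` with `⟨c, b⟩ = ⟨a, S b⟩`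
for all `b` in the domain of `S`. -/
def adjDom (S : UnboundedOp A) : Set A :=
  {a : A | ∃ c : A, ∀ b ∈ S.dom, star a * S.toFun b = star c * b}

/-- `S` is semiregular if (it is closable, which is automatic here, and) its
adjoint is densely defined. -/
def Semiregular (S : UnboundedOp A) : Prop := Dense S.adjDom

/-- `S` is a closed operator if its graph is closed. -/
def IsClosedOp (S : UnboundedOp A) : Prop :=
  IsClosed {p : A × A | p.1 ∈ S.dom ∧ p.2 = S.toFun p.1}

end UnboundedOp

/-- An ideal `K` of `A` is essential if it has trivial annihilator. -/
def TwoSidedIdeal.Essential {A : Type*} [NonUnitalCStarAlgebra A] (K : TwoSidedIdeal A) : Prop :=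
  ∀ a : A, (∀ k ∈ K, a * k = 0) → a = 0

open Filter Topology Unitization in
private lemma approx2 {A : Type*} [NonUnitalCStarAlgebra A] (z w : A) :
    ∃ e : ℕ → A, (∀ n, IsSelfAdjoint (e n)) ∧
      (∀ n, ∃ c : Unitization ℂ A,
        (e n : Unitization ℂ A) = ((star z * z + star w * w : A) : Unitization ℂ A) * c) ∧
      Tendsto (fun n => z * e n) atTop (𝓝 z) ∧
      Tendsto (fun n => w * e n) atTop (𝓝 w) := by
  letI : PartialOrder (Unitization ℂ A) := CStarAlgebra.spectralOrder _
  letI : StarOrderedRing (Unitization ℂ A) := CStarAlgebra.spectralOrderedRing _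
  set κ : Unitization ℂ A := ((star z * z + star w * w : A) : Unitization ℂ A) with hκdef
  have hκ' : κ = star (z : Unitization ℂ A) * z + star (w : Unitization ℂ A) * w := by
    rw [hκdef, inr_add, inr_mul, inr_mul, inr_star, inr_star]
  have hκ : 0 ≤ κ := by
    rw [hκ']; exact add_nonneg (star_mul_self_nonneg _) (star_mul_self_nonneg _)
  have hsa : IsSelfAdjoint κ := .of_nonneg hκ
  have hspec : ∀ t ∈ spectrum ℝ κ, 0 ≤ t := fun t ht => spectrum_nonneg_of_nonneg hκ ht
  -- construction of x n := cfc (f n) κ, and its properties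
  have main : ∀ n : ℕ, ∃ x : Unitization ℂ A, IsSelfAdjoint x ∧ (∃ c, x = κ * c) ∧
      ∀ v : A, star (v : Unitization ℂ A) * v ≤ κ →
        ‖(v : Unitization ℂ A) - v * x‖ ≤ Real.sqrt (1 / (4 * ((n : ℝ) + 1))) := by
    intro n
    set m : ℝ := (n : ℝ) + 1 with hm
    have hm0 : 0 < m := by positivity
    set g : ℝ → ℝ := fun t => m * (1 + m * t)⁻¹ with hgdef
    set f : ℝ → ℝ := fun t => t * g t with hfdef
    have hden : ∀ t ∈ spectrum ℝ κ, (1 : ℝ) + m * t ≠ 0 := by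
      intro t ht
      have := hspec t ht
      positivity
    have hg_cont : ContinuousOn g (spectrum ℝ κ) := by
      apply continuousOn_const.mul
      exact ContinuousOn.inv₀ (by fun_prop) hden
    have hf_cont : ContinuousOn f (spectrum ℝ κ) := continuousOn_id.mul hg_cont
    set x : Unitization ℂ A := cfc f κ with hxdef
    have hx_eq : x = κ * cfc g κ := by
      rw [hxdef, hfdef]
      rw [cfc_mul (fun t : ℝ => t) g κ (continuousOn_id' _) hg_cont, cfc_id' ℝ κ]
    have hxsa : IsSelfAdjoint x := cfc_predicate f κ
    have one_sub : 1 - x = cfc (fun t => 1 - f t) κ := by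
      rw [cfc_sub _ _ κ continuousOn_const hf_cont, cfc_const_one ℝ κ, hxdef]
    have hysa : IsSelfAdjoint (1 - x) := by rw [one_sub]; exact cfc_predicate _ κ
    have conj : (1 - x) * κ * (1 - x) = cfc (fun t => (1 - f t) * t * (1 - f t)) κ := by
      rw [cfc_mul (fun t => (1 - f t) * t) (fun t => 1 - f t) κ
        ((continuousOn_const.sub hf_cont).mul (continuousOn_id' _))
        (continuousOn_const.sub hf_cont),
        cfc_mul (fun t => 1 - f t) (fun t : ℝ => t) κ (continuousOn_const.sub hf_cont)
        (continuousOn_id' _),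
        cfc_id' ℝ κ, ← one_sub]
    have bound : ‖(1 - x) * κ * (1 - x)‖ ≤ 1 / (4 * m) := by
      rw [conj]
      apply norm_cfc_le (by positivity)
      intro t ht
      have ht0 := hspec t ht
      have hd : (0:ℝ) < 1 + m * t := by positivity
      have h1 : 1 - f t = (1 + m * t)⁻¹ := by
        rw [hfdef, hgdef]
        field_simp
        ring
      rw [h1]
      have h2 : (1 + m * t)⁻¹ * t * (1 + m * t)⁻¹ = t / (1 + m * t) ^ 2 := by
        rw [pow_two]
        field_simp
      rw [h2, Real.norm_eq_abs, abs_of_nonneg (by positivity),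
        div_le_div_iff₀ (by positivity) (by positivity)]
      nlinarith [sq_nonneg (1 - m * t)]
    refine ⟨x, hxsa, ⟨cfc g κ, hx_eq⟩, fun v hv => ?_⟩
    have hveq : (v : Unitization ℂ A) - v * x = (v : Unitization ℂ A) * (1 - x) := by
      rw [mul_sub, mul_one]
    have hstar : star ((v : Unitization ℂ A) * (1 - x)) * ((v : Unitization ℂ A) * (1 - x))
        = (1 - x) * (star (v : Unitization ℂ A) * v) * (1 - x) := by
      rw [star_mul, hysa.star_eq]
      simp only [mul_assoc]
    have hle : (1 - x) * (star (v : Unitization ℂ A) * v) * (1 - x) ≤ (1 - x) * κ * (1 - x) := by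
      have := star_left_conjugate_le_conjugate hv (1 - x)
      rwa [hysa.star_eq] at this
    have hpos : 0 ≤ (1 - x) * (star (v : Unitization ℂ A) * v) * (1 - x) := by
      rw [← hstar]; exact star_mul_self_nonneg _
    have hnorm : ‖(v : Unitization ℂ A) * (1 - x)‖ ^ 2 ≤ 1 / (4 * m) := by
      calc ‖(v : Unitization ℂ A) * (1 - x)‖ ^ 2
          = ‖star ((v : Unitization ℂ A) * (1 - x)) * ((v : Unitization ℂ A) * (1 - x))‖ := by
            rw [CStarRing.norm_star_mul_self, pow_two]
        _ = ‖(1 - x) * (star (v : Unitization ℂ A) * v) * (1 - x)‖ := by rw [hstar]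
        _ ≤ ‖(1 - x) * κ * (1 - x)‖ := CStarAlgebra.norm_le_norm_of_nonneg_of_le hpos hle
        _ ≤ 1 / (4 * m) := bound
    rw [hveq]
    rw [show Real.sqrt (1 / (4 * ((n:ℝ) + 1))) = Real.sqrt (1 / (4 * m)) by rw [hm]]
    exact (Real.le_sqrt (norm_nonneg _) (by positivity)).mpr hnorm
  choose x hxsa hxc hxkey using main
  -- pull back to A
  have hfst : ∀ n, (x n).fst = 0 := by
    intro n
    obtain ⟨c, hc⟩ := hxc n
    rw [hc, fst_mul, hκdef, fst_inr, zero_mul]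
  set e : ℕ → A := fun n => (x n).snd with hedef
  have hinr : ∀ n, ((e n : A) : Unitization ℂ A) = x n := by
    intro n
    exact Unitization.ext ((hfst n).symm) rfl
  have hsqrt : Tendsto (fun n : ℕ => Real.sqrt (1 / (4 * ((n : ℝ) + 1)))) atTop (𝓝 0) := by
    have h0 : Tendsto (fun n : ℕ => 1 / (4 * ((n : ℝ) + 1))) atTop (𝓝 0) := by
      have := tendsto_one_div_add_atTop_nhds_zero_nat (𝕜 := ℝ)
      have h1 : (fun n : ℕ => 1 / (4 * ((n : ℝ) + 1)))
          = fun n : ℕ => (1/4 : ℝ) * (1 / ((n : ℝ) + 1)) := by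
        funext n; field_simp
      rw [h1]
      simpa using this.const_mul (1/4 : ℝ)
    have := (Real.continuous_sqrt.tendsto 0).comp h0
    simpa only [Function.comp_def, Real.sqrt_zero] using this
  have key : ∀ v : A, star (v : Unitization ℂ A) * v ≤ κ →
      Tendsto (fun n => v * e n) atTop (𝓝 v) := by
    intro v hv
    rw [tendsto_iff_norm_sub_tendsto_zero]
    apply squeeze_zero (fun n => norm_nonneg _) (fun n => ?_) hsqrt
    rw [norm_sub_rev, ← Unitization.norm_inr (𝕜 := ℂ), inr_sub, inr_mul, hinr n]
    exact hxkey n v hv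
  refine ⟨e, ?_, ?_, ?_, ?_⟩
  · intro n
    have := (hxsa n).star_eq
    rw [← hinr n, ← inr_star] at this
    exact inr_injective this
  · intro n
    obtain ⟨c, hc⟩ := hxc n
    exact ⟨c, by rw [hinr n, hc]⟩
  · apply key
    rw [hκ']
    exact le_add_of_nonneg_right (star_mul_self_nonneg _)
  · apply key
    rw [hκ']
    exact le_add_of_nonneg_left (star_mul_self_nonneg _)

private lemma inr_mul_eq {A : Type*} [NonUnitalCStarAlgebra A] (k : A) (c : Unitization ℂ A) :
    (k : Unitization ℂ A) * c = ((c.fst • k + k * c.snd : A) : Unitization ℂ A) := by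
  refine Unitization.ext ?_ ?_
  · simp [Unitization.fst_mul]
  · simp [Unitization.snd_mul]

open Filter Topology in
private lemma smul_mem_of_isClosed {A : Type*} [NonUnitalCStarAlgebra A]
    (K : TwoSidedIdeal A) (hKc : IsClosed (K : Set A)) {k : A} (hk : k ∈ K) (c : ℂ) :
    c • k ∈ K := by
  obtain ⟨e, -, -, hke, -⟩ := approx2 k 0
  have hmem : ∀ n, k * (c • e n) ∈ (K : Set A) := fun n => K.mul_mem_right k (c • e n) hk
  have ht : Tendsto (fun n => k * (c • e n)) atTop (𝓝 (c • k)) := by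
    have := hke.const_smul c
    simpa only [mul_smul_comm] using this
  exact hKc.mem_of_tendsto ht (.of_forall hmem)

/-- `D(S)·K` is a core for the restriction `S|_K`: the closure of the graph of `S`
restricted to products `d * k` (`d ∈ D(S)`, `k ∈ K`) is the graph of `S|_K`. -/

theorem stmt_4 {A : Type*} [NonUnitalCStarAlgebra A]
    (K : TwoSidedIdeal A) (hKc : IsClosed (K : Set A)) (hKe : K.Essential)
    (S : UnboundedOp A) (hS : S.Semiregular) (hSc : S.IsClosedOp) :
    closure {p : A × A | (∃ d ∈ S.dom, ∃ k ∈ K, p.1 = d * k) ∧ p.2 = S.toFun p.1}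
      = {p : A × A | p.1 ∈ S.dom ∧ p.1 ∈ K ∧ p.2 = S.toFun p.1} := by
  apply Set.Subset.antisymm
  · apply closure_minimal
    · rintro ⟨p1, p2⟩ ⟨⟨d, hd, k, hk, hp1⟩, hp2⟩
      subst hp1
      exact ⟨S.mul_mem d hd k, K.mul_mem_left d k hk, hp2⟩
    · have heq : {p : A × A | p.1 ∈ S.dom ∧ p.1 ∈ K ∧ p.2 = S.toFun p.1}
          = {p : A × A | p.1 ∈ S.dom ∧ p.2 = S.toFun p.1} ∩ (Prod.fst ⁻¹' (K : Set A)) := by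
        ext p
        simp only [Set.mem_setOf_eq, Set.mem_inter_iff, Set.mem_preimage, SetLike.mem_coe]
        tauto
      rw [heq]
      exact hSc.inter (hKc.preimage continuous_fst)
  · rintro ⟨a, b⟩ ⟨ha, haK, hb⟩
    simp only at ha haK hb
    subst hb
    -- Step 1: every left multiple of `S a` lies in `K`
    have hT : ∀ x : A, x * S.toFun a ∈ K := by
      have hCc : IsClosed {x : A | x * S.toFun a ∈ K} := by
        have : {x : A | x * S.toFun a ∈ K} = (· * S.toFun a) ⁻¹' (K : Set A) := rfl
        rw [this]
        exact hKc.preimage (continuous_id.mul continuous_const)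
      have hsub : star '' S.adjDom ⊆ {x : A | x * S.toFun a ∈ K} := by
        rintro _ ⟨c, hc, rfl⟩
        obtain ⟨d, hd⟩ := hc
        show star c * S.toFun a ∈ K
        rw [hd a ha]
        exact K.mul_mem_left (star d) a haK
      intro x
      have hx : x ∈ closure (star '' S.adjDom) := by
        have h1 : star x ∈ closure S.adjDom := hS _
        have h2 : star (star x) ∈ star '' closure S.adjDom := ⟨star x, h1, rfl⟩
        rw [star_star] at h2
        exact (image_closure_subset_closure_image continuous_star) h2
      exact hCc.closure_subset ((closure_mono hsub) hx)
    -- Step 2: `S a ∈ K`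
    have hSaK : S.toFun a ∈ K := by
      obtain ⟨e, hesa, -, he, -⟩ := approx2 (star (S.toFun a)) 0
      have h2 : Filter.Tendsto (fun n => e n * S.toFun a) Filter.atTop (nhds (S.toFun a)) := by
        have := (continuous_star.tendsto _).comp he
        simpa only [Function.comp_def, star_mul, star_star, fun n => (hesa n).star_eq]
          using this
      exact hKc.mem_of_tendsto h2 (.of_forall fun n => hT (e n))
    -- Step 3: approximate `(a, S a)` by `(a * eₙ, S (a * eₙ))`
    obtain ⟨e, -, hec, hea, heb⟩ := approx2 a (S.toFun a)
    set k0 : A := star a * a + star (S.toFun a) * S.toFun a with hk0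
    have hk0K : k0 ∈ K := by
      refine add_mem (K.mul_mem_left (star a) a haK) (K.mul_mem_left _ _ hSaK)
    have heK : ∀ n, e n ∈ K := by
      intro n
      obtain ⟨c, hc⟩ := hec n
      rw [inr_mul_eq] at hc
      have he : e n = c.fst • k0 + k0 * c.snd := Unitization.inr_injective hc
      rw [he]
      exact add_mem (smul_mem_of_isClosed K hKc hk0K c.fst) (K.mul_mem_right k0 c.snd hk0K)
    have hmem : ∀ n, ((a * e n, S.toFun (a * e n)) : A × A) ∈
        {p : A × A | (∃ d ∈ S.dom, ∃ k ∈ K, p.1 = d * k) ∧ p.2 = S.toFun p.1} :=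
      fun n => ⟨⟨a, ha, e n, heK n, rfl⟩, rfl⟩
    have hconv : Filter.Tendsto (fun n => ((a * e n, S.toFun (a * e n)) : A × A))
        Filter.atTop (nhds (a, S.toFun a)) := by
      refine Filter.Tendsto.prodMk_nhds hea ?_
      have heq : (fun n => S.toFun (a * e n)) = fun n => S.toFun a * e n := by
        funext n
        exact S.map_mul' a ha (e n)
      rw [heq]
      exact heb
    exact mem_closure_of_tendsto hconv (.of_forall hmem)
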